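/- Let p be an odd prime and k a perfect commutative ring of characteristic p. Then multiplication by p on Ω¹_{W(k)}, i.e., the map Ω¹_{W(k)} → Ω¹_{W(k)} sending ω to p·ω, is a bijection. -/

import Mathlib

open WittVector MvPolynomial

set_option linter.unusedSectionVars false
set_option maxHeartbeats 1000000

noncomputable section Stmt5Aux

namespace Stmt5Aux

variable (p : ℕ) [hp : Fact p.Prime] (k : Type*) [CommRing k] [CharP k p] [PerfectRing k p]

local notation "W" => WittVector p k
local notation "dd" => KaehlerDifferential.D ℤ (WittVector p k)

theorem verschiebung_inj : Function.Injective (verschiebung : W → W) := by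
  intro x y h
  ext n
  have := congrArg (fun z : W => z.coeff (n + 1)) h
  simpa [verschiebung_coeff_succ] using this

theorem p_mul_injective : Function.Injective (fun x : W => (p : W) * x) := by
  intro x y h
  simp only [mul_comm] at h
  rw [← verschiebung_frobenius, ← verschiebung_frobenius] at h
  exact (frobenius_bijective p k).injective (verschiebung_inj p k h)

theorem exists_p_dvd (x : W) (h : x.coeff 0 = 0) : ∃ y : W, x = p * y := by
  have hv : verschiebung (WittVector.mk p fun n => x.coeff (n + 1)) = x := by
    ext n
    cases n with
    | zero => rw [verschiebung_coeff_zero, h]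
    | succ n => rw [verschiebung_coeff_succ, coeff_mk]
  obtain ⟨y, hy⟩ := (frobenius_bijective p k).surjective (WittVector.mk p fun n => x.coeff (n + 1))
  exact ⟨y, by rw [← hv, ← hy, verschiebung_frobenius, mul_comm]⟩

theorem exists_c (x : W) : ∃ cx : W, frobenius x = x ^ p + p * cx := by
  have g0 : ∀ z : W, ghostComponent 0 z = z.coeff 0 := by
    intro z
    rw [ghostComponent_apply, wittPolynomial_zero, aeval_X]
  have h0 : (frobenius x - x ^ p).coeff 0 = 0 := by
    rw [← g0, map_sub, map_pow, g0, g0, coeff_frobenius_charP]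
    ring
  obtain ⟨y, hy⟩ := exists_p_dvd p k _ h0
  exact ⟨y, by rw [← hy]; ring⟩

/-- Cancellation of `p` in Kähler differentials of polynomial rings over `ℤ`. -/
theorem omega_cancel {n : ℕ} (ω η : Ω[MvPolynomial (Fin n) ℤ⁄ℤ])
    (h : p • ω = p • η) : ω = η := by
  apply (KaehlerDifferential.mvPolynomialBasis ℤ (Fin n)).repr.injective
  have h2 := congrArg (KaehlerDifferential.mvPolynomialBasis ℤ (Fin n)).repr h
  rw [map_nsmul, map_nsmul] at h2
  refine Finsupp.ext fun i => ?_
  have h3 := congrArg (fun f => f i) h2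
  simp only [Finsupp.smul_apply, nsmul_eq_mul] at h3
  exact mul_left_cancel₀ (Nat.cast_ne_zero.mpr hp.out.ne_zero) h3

/-- `p • (x^(p-1) • dx + dy) = d (x^p + p*y)` in any `ℤ`-algebra. -/
theorem pD (A : Type*) [CommRing A] (x y : A) :
    p • ((x ^ (p - 1)) • KaehlerDifferential.D ℤ A x + KaehlerDifferential.D ℤ A y) =
      KaehlerDifferential.D ℤ A (x ^ p + p * y) := by
  rw [map_add, Derivation.leibniz_pow, Derivation.leibniz, Derivation.map_natCast,
    smul_zero, add_zero, smul_add, Nat.cast_smul_eq_nsmul]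

theorem pD' (R A : Type*) [CommRing R] [CommRing A] [Algebra R A] (x y : A) :
    p • ((x ^ (p - 1)) • KaehlerDifferential.D R A x + KaehlerDifferential.D R A y) =
      KaehlerDifferential.D R A (x ^ p + p * y) := by
  rw [map_add, Derivation.leibniz_pow, Derivation.leibniz, Derivation.map_natCast,
    smul_zero, add_zero, smul_add, Nat.cast_smul_eq_nsmul]

section Univ

/-- universal Leibniz identity -/
theorem univ_leibniz :
    (((X 0 * X 1 : MvPolynomial (Fin 4) ℤ) ^ (p - 1)) •
        KaehlerDifferential.D ℤ _ (X 0 * X 1 : MvPolynomial (Fin 4) ℤ) +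
      KaehlerDifferential.D ℤ _
        ((X 0)^p * X 3 + (X 1)^p * X 2 + (p : MvPolynomial (Fin 4) ℤ) * (X 2 * X 3))) =
    ((X 0)^p + (p : MvPolynomial (Fin 4) ℤ) * X 2) •
        (((X 1 : MvPolynomial (Fin 4) ℤ) ^ (p - 1)) •
            KaehlerDifferential.D ℤ _ (X 1 : MvPolynomial (Fin 4) ℤ) +
          KaehlerDifferential.D ℤ _ (X 3 : MvPolynomial (Fin 4) ℤ)) +
    ((X 1)^p + (p : MvPolynomial (Fin 4) ℤ) * X 3) •
        (((X 0 : MvPolynomial (Fin 4) ℤ) ^ (p - 1)) •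
            KaehlerDifferential.D ℤ _ (X 0 : MvPolynomial (Fin 4) ℤ) +
          KaehlerDifferential.D ℤ _ (X 2 : MvPolynomial (Fin 4) ℤ)) := by
  apply omega_cancel p
  rw [pD' p ℤ (MvPolynomial (Fin 4) ℤ), smul_add, smul_comm p, smul_comm p, pD' p ℤ (MvPolynomial (Fin 4) ℤ), pD' p ℤ (MvPolynomial (Fin 4) ℤ), ← Derivation.leibniz]
  have harg : ((X 0 * X 1 : MvPolynomial (Fin 4) ℤ))^p
      + (p : MvPolynomial (Fin 4) ℤ) *
        ((X 0)^p * X 3 + (X 1)^p * X 2 + (p : MvPolynomial (Fin 4) ℤ) * (X 2 * X 3))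
      = ((X 0)^p + (p : MvPolynomial (Fin 4) ℤ) * X 2) *
        ((X 1)^p + (p : MvPolynomial (Fin 4) ℤ) * X 3) := by
    ring
  rw [harg]


/-- universal additivity identity -/
theorem univ_add (S : MvPolynomial (Fin 4) ℤ)
    (hS : (X 0 + X 1 : MvPolynomial (Fin 4) ℤ) ^ p
      = (X 0) ^ p + (X 1) ^ p + (p : MvPolynomial (Fin 4) ℤ) * S) :
    (((X 0 + X 1 : MvPolynomial (Fin 4) ℤ) ^ (p - 1)) •
        KaehlerDifferential.D ℤ _ (X 0 + X 1 : MvPolynomial (Fin 4) ℤ) +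
      KaehlerDifferential.D ℤ _ (X 2 + X 3 - S : MvPolynomial (Fin 4) ℤ)) =
    (((X 0 : MvPolynomial (Fin 4) ℤ) ^ (p - 1)) •
        KaehlerDifferential.D ℤ _ (X 0 : MvPolynomial (Fin 4) ℤ) +
      KaehlerDifferential.D ℤ _ (X 2 : MvPolynomial (Fin 4) ℤ)) +
    (((X 1 : MvPolynomial (Fin 4) ℤ) ^ (p - 1)) •
        KaehlerDifferential.D ℤ _ (X 1 : MvPolynomial (Fin 4) ℤ) +
      KaehlerDifferential.D ℤ _ (X 3 : MvPolynomial (Fin 4) ℤ)) := by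
  apply omega_cancel p
  rw [pD' p ℤ (MvPolynomial (Fin 4) ℤ), smul_add, pD' p ℤ (MvPolynomial (Fin 4) ℤ), pD' p ℤ (MvPolynomial (Fin 4) ℤ), ← map_add]
  have harg : ((X 0 + X 1 : MvPolynomial (Fin 4) ℤ)) ^ p
      + (p : MvPolynomial (Fin 4) ℤ) * (X 2 + X 3 - S)
      = ((X 0) ^ p + (p : MvPolynomial (Fin 4) ℤ) * X 2)
        + ((X 1) ^ p + (p : MvPolynomial (Fin 4) ℤ) * X 3) := by
    linear_combination hS
  rw [harg]

variable (c : WittVector p k → WittVector p k)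
variable (hc : ∀ x : WittVector p k, frobenius x = x ^ p + p * c x)

include hc

theorem c_mul (a b : W) :
    c (a * b) = a ^ p * c b + b ^ p * c a + p * (c a * c b) := by
  have h := hc (a * b)
  rw [map_mul, hc a, hc b] at h
  refine p_mul_injective p k ?_
  show (p : W) * _ = (p : W) * _
  linear_combination -h - mul_pow a b p

theorem D_mul (a b : WittVector p k) :
    ((a * b) ^ (p - 1)) • dd (a * b) + dd (c (a * b))
      = frobenius a • ((b ^ (p - 1)) • dd b + dd (c b))
        + frobenius b • ((a ^ (p - 1)) • dd a + dd (c a)) := by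
  classical
  letI : Algebra (MvPolynomial (Fin 4) ℤ) (WittVector p k) :=
    (aeval ![a, b, c a, c b] : MvPolynomial (Fin 4) ℤ →ₐ[ℤ] WittVector p k).toRingHom.toAlgebra
  haveI : IsScalarTower ℤ (MvPolynomial (Fin 4) ℤ) (WittVector p k) :=
    IsScalarTower.of_algebraMap_eq' (RingHom.ext_int _ _)
  haveI : SMulCommClass ℤ (MvPolynomial (Fin 4) ℤ) (WittVector p k) :=
    ⟨fun z Q w => by simp only [Algebra.smul_def, zsmul_eq_mul]; ring⟩
  set v : Fin 4 → WittVector p k := ![a, b, c a, c b] with hv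
  set f := KaehlerDifferential.map ℤ ℤ (MvPolynomial (Fin 4) ℤ) (WittVector p k) with hf
  have hD : ∀ Q : MvPolynomial (Fin 4) ℤ,
      f (KaehlerDifferential.D ℤ _ Q) = dd (aeval v Q) := fun Q =>
    KaehlerDifferential.map_D ℤ ℤ _ _ Q
  have hs : ∀ (Q : MvPolynomial (Fin 4) ℤ) (ω : Ω[MvPolynomial (Fin 4) ℤ⁄ℤ]),
      f (Q • ω) = aeval v Q • f ω := fun Q ω => by
    rw [map_smul]
    exact (algebraMap_smul (WittVector p k) Q (f ω)).symm
  have key := congrArg f (univ_leibniz p)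
  simp only [map_add, hs, hD, map_mul, map_pow, aeval_X, map_natCast, hv,
    Matrix.cons_val_zero, Matrix.cons_val_one, Matrix.head_cons,
    Matrix.cons_val_two, Matrix.tail_cons, Matrix.cons_val_three] at key
  rw [hc a, hc b, c_mul p k c hc a b, map_add, map_add]
  exact key

theorem D_addf (a b : WittVector p k) :
    ((a + b) ^ (p - 1)) • dd (a + b) + dd (c (a + b))
      = ((a ^ (p - 1)) • dd a + dd (c a)) + ((b ^ (p - 1)) • dd b + dd (c b)) := by
  classical
  obtain ⟨S, hS⟩ : ∃ S : MvPolynomial (Fin 4) ℤ, (X 0 + X 1 : MvPolynomial (Fin 4) ℤ) ^ p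
      = (X 0) ^ p + (X 1) ^ p + (p : MvPolynomial (Fin 4) ℤ) * S := by
    obtain ⟨S, hS⟩ := exists_add_pow_prime_eq hp.out (X 0 : MvPolynomial (Fin 4) ℤ) (X 1)
    exact ⟨X 0 * X 1 * S, by rw [hS]; ring⟩
  letI : Algebra (MvPolynomial (Fin 4) ℤ) (WittVector p k) :=
    (aeval ![a, b, c a, c b] : MvPolynomial (Fin 4) ℤ →ₐ[ℤ] WittVector p k).toRingHom.toAlgebra
  haveI : IsScalarTower ℤ (MvPolynomial (Fin 4) ℤ) (WittVector p k) :=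
    IsScalarTower.of_algebraMap_eq' (RingHom.ext_int _ _)
  haveI : SMulCommClass ℤ (MvPolynomial (Fin 4) ℤ) (WittVector p k) :=
    ⟨fun z Q w => by simp only [Algebra.smul_def, zsmul_eq_mul]; ring⟩
  set v : Fin 4 → WittVector p k := ![a, b, c a, c b] with hv
  set f := KaehlerDifferential.map ℤ ℤ (MvPolynomial (Fin 4) ℤ) (WittVector p k) with hf
  have hD : ∀ Q : MvPolynomial (Fin 4) ℤ,
      f (KaehlerDifferential.D ℤ _ Q) = dd (aeval v Q) := fun Q =>
    KaehlerDifferential.map_D ℤ ℤ _ _ Q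
  have hs : ∀ (Q : MvPolynomial (Fin 4) ℤ) (ω : Ω[MvPolynomial (Fin 4) ℤ⁄ℤ]),
      f (Q • ω) = aeval v Q • f ω := fun Q ω => by
    rw [map_smul]
    exact (algebraMap_smul (WittVector p k) Q (f ω)).symm
  have hsv : (a + b) ^ p = a ^ p + b ^ p + p * aeval v S := by
    have := congrArg (aeval v) hS
    simpa [hv, Matrix.cons_val_zero, Matrix.cons_val_one, Matrix.head_cons] using this
  have hcab : c (a + b) = c a + c b - aeval v S := by
    have h1 := hc (a + b)
    rw [map_add, hc a, hc b] at h1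
    refine p_mul_injective p k ?_
    show (p : WittVector p k) * _ = (p : WittVector p k) * _
    linear_combination -h1 - hsv
  have key := congrArg f (univ_add p S hS)
  simp only [map_add, map_sub, hs, hD, map_pow, aeval_X, map_natCast, hv,
    Matrix.cons_val_zero, Matrix.cons_val_one, Matrix.head_cons,
    Matrix.cons_val_two, Matrix.tail_cons, Matrix.cons_val_three] at key
  rw [hcab]
  simp only [map_add, map_sub]
  exact key

end Univ

/-- type synonym carrying the twisted module structure -/
def Tw (_f : WittVector p k →+* WittVector p k) : Type _ := Ω[WittVector p k⁄ℤ]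

instance (f : WittVector p k →+* WittVector p k) : AddCommGroup (Tw p k f) :=
  inferInstanceAs (AddCommGroup (Ω[WittVector p k⁄ℤ]))

instance (f : WittVector p k →+* WittVector p k) : Module (WittVector p k) (Tw p k f) :=
  Module.compHom (Ω[WittVector p k⁄ℤ]) f

/-- identity map out of the twist -/
def ofTw (f : WittVector p k →+* WittVector p k) : Tw p k f → Ω[WittVector p k⁄ℤ] := id

instance (f : WittVector p k →+* WittVector p k) :
    IsScalarTower ℤ (WittVector p k) (Tw p k f) :=
  ⟨fun z a m => by
    have h : f (z • a) • ofTw p k f m = z • (f a • ofTw p k f m) := by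
      rw [map_zsmul, smul_assoc]
    exact h⟩

variable (c : WittVector p k → WittVector p k)
variable (hc : ∀ x : WittVector p k, frobenius x = x ^ p + p * c x)

/-- the derivation `x ↦ x^(p-1) dx + d(c x)` into the Frobenius twist -/
def psiDer : Derivation ℤ (WittVector p k) (Tw p k (frobeniusEquiv p k).toRingHom) where
  toLinearMap :=
    ((AddMonoidHom.mk' (fun x : WittVector p k =>
        ((x ^ (p - 1)) • dd x + dd (c x) : Ω[WittVector p k⁄ℤ]))
      (fun a b => D_addf p k c hc a b)).toIntLinearMap :
        WittVector p k →ₗ[ℤ] Tw p k (frobeniusEquiv p k).toRingHom)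
  map_one_eq_zero' := by
    have hone : c 1 = 0 := by
      refine p_mul_injective p k ?_
      show (p : WittVector p k) * c 1 = (p : WittVector p k) * 0
      have := hc 1
      rw [map_one] at this
      linear_combination -this
    have h : ((1 : WittVector p k) ^ (p - 1)) • dd 1 + dd (c 1) = (0 : Ω[WittVector p k⁄ℤ]) := by
      rw [hone, Derivation.map_one_eq_zero, map_zero, smul_zero, add_zero]
    exact h
  leibniz' a b := D_mul p k c hc a b

/-- the derivation `x ↦ d (φ⁻¹ x)` into the inverse-Frobenius twist -/
def chiDer : Derivation ℤ (WittVector p k) (Tw p k (frobeniusEquiv p k).symm.toRingHom) where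
  toLinearMap :=
    ((AddMonoidHom.mk' (fun x : WittVector p k =>
        (dd ((frobeniusEquiv p k).symm x) : Ω[WittVector p k⁄ℤ]))
      (fun a b => by simp only [map_add])).toIntLinearMap :
        WittVector p k →ₗ[ℤ] Tw p k (frobeniusEquiv p k).symm.toRingHom)
  map_one_eq_zero' := by
    have h : dd ((frobeniusEquiv p k).symm 1) = (0 : Ω[WittVector p k⁄ℤ]) := by
      rw [map_one]
      exact (KaehlerDifferential.D ℤ (WittVector p k)).map_one_eq_zero
    exact h
  leibniz' a b := by
    have h : dd ((frobeniusEquiv p k).symm (a * b))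
      = ((frobeniusEquiv p k).symm a • dd ((frobeniusEquiv p k).symm b)
        + (frobeniusEquiv p k).symm b • dd ((frobeniusEquiv p k).symm a)
          : Ω[WittVector p k⁄ℤ]) := by
      rw [map_mul]
      exact Derivation.leibniz _ _ _
    exact h

end Stmt5Aux


theorem stmt_5 (p : ℕ) [Fact p.Prime] (hp : Odd p)
    (k : Type*) [CommRing k] [CharP k p] [PerfectRing k p] :
    Function.Bijective (fun ω : Ω[WittVector p k⁄ℤ] => p • ω) := by
  classical
  choose c hc using Stmt5Aux.exists_c p k
  set d := KaehlerDifferential.D ℤ (WittVector p k) with hd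
  let ψl := (Stmt5Aux.psiDer p k c hc).liftKaehlerDifferential
  let χl := (Stmt5Aux.chiDer p k).liftKaehlerDifferential
  set ψ : Ω[WittVector p k⁄ℤ] → Ω[WittVector p k⁄ℤ] :=
    fun ω => Stmt5Aux.ofTw p k _ (ψl ω) with hψ
  set χ : Ω[WittVector p k⁄ℤ] → Ω[WittVector p k⁄ℤ] :=
    fun ω => Stmt5Aux.ofTw p k _ (χl ω) with hχ
  have hψd : ∀ x : WittVector p k, ψ (d x) = (x ^ (p - 1)) • d x + d (c x) := fun x =>
    Derivation.liftKaehlerDifferential_comp_D (Stmt5Aux.psiDer p k c hc) x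
  have hχd : ∀ x : WittVector p k, χ (d x) = d ((frobeniusEquiv p k).symm x) := fun x =>
    Derivation.liftKaehlerDifferential_comp_D (Stmt5Aux.chiDer p k) x
  have hψadd : ∀ x y, ψ (x + y) = ψ x + ψ y := fun x y => ψl.map_add x y
  have hχadd : ∀ x y, χ (x + y) = χ x + χ y := fun x y => χl.map_add x y
  have hψn : ∀ (n : ℕ) ω, ψ (n • ω) = n • ψ ω := fun n ω =>
    ψl.toAddMonoidHom.map_nsmul n ω
  have hχn : ∀ (n : ℕ) ω, χ (n • ω) = n • χ ω := fun n ω =>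
    χl.toAddMonoidHom.map_nsmul n ω
  have hψs : ∀ (a : WittVector p k) ω, ψ (a • ω) = frobenius a • ψ ω := fun a ω =>
    ψl.map_smul a ω
  have hχs : ∀ (a : WittVector p k) ω, χ (a • ω) = (frobeniusEquiv p k).symm a • χ ω :=
    fun a ω => χl.map_smul a ω
  have key : ∀ ω, p • ψ (χ ω) = ω := by
    let L : Ω[WittVector p k⁄ℤ] →ₗ[WittVector p k] Ω[WittVector p k⁄ℤ] :=
    { toFun := fun ω => p • ψ (χ ω)
      map_add' := fun x y => by rw [hχadd, hψadd, smul_add]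
      map_smul' := fun a ω => by
        dsimp only [RingHom.id_apply]
        rw [hχs, hψs, ← WittVector.frobeniusEquiv_apply, RingEquiv.apply_symm_apply, smul_comm] }
    have hL : L = LinearMap.id := by
      apply LinearMap.ext_on (KaehlerDifferential.span_range_derivation ℤ (WittVector p k))
      rintro _ ⟨x, rfl⟩
      show p • ψ (χ (d x)) = d x
      rw [hχd, hψd, Stmt5Aux.pD p (WittVector p k),
        ← hc ((frobeniusEquiv p k).symm x), ← WittVector.frobeniusEquiv_apply,
        RingEquiv.apply_symm_apply]
    intro ω
    have := DFunLike.congr_fun hL ω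
    exact this
  refine Function.bijective_iff_has_inverse.mpr ⟨fun ω => ψ (χ ω), fun ω => ?_, fun ω => key ω⟩
  show ψ (χ (p • ω)) = ω
  rw [hχn, hψn]
  exact key ω
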